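/- If u₀ ∈ 𝒮(ℝ^d), then the function u(t,x) = (𝒦_t u₀)(x) satisfies: u(t,·) ∈ 𝒮(ℝ^d) for each t ∈ ℝ, t ↦ u(t,x) is differentiable for each x ∈ ℝ^d, ∂_t u(t,x) + i ( p(D)u(t,·)(x) + ⟨v,x⟩ u(t,x) ) = 0 for all (t,x) ∈ ℝ × ℝ^d, and u(0,·) = u₀, where p(D)f = ℱ^{−1}(p · ℱ f). -/

import Mathlib

noncomputable section

open Real Filter MeasureTheory Set SchwartzMap
open scoped BigOperators Topology InnerProductSpace ComplexConjugate

abbrev Rd (d : ℕ) := EuclideanSpace ℝ (Fin d)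

/-- Tempered distributions on `ℝ^d`, represented as continuous linear functionals on
the Schwartz space; the (conjugate-linear in the second argument) pairing of the paper
is `(u, ψ) = u (conj ψ)`. -/
abbrev TD (d : ℕ) := SchwartzMap (Rd d) ℂ →L[ℂ] ℂ

/-- The Fourier transform `ℱf(ξ) = (2π)^{-d/2} ∫ f(x) e^{-i⟨x,ξ⟩} dx`. -/
def FT {d : ℕ} (f : Rd d → ℂ) (ξ : Rd d) : ℂ :=
  (((2 * Real.pi) ^ (-(d : ℝ) / 2) : ℝ) : ℂ) *
    ∫ x : Rd d, f x * Complex.exp (-Complex.I * ((⟪x, ξ⟫_ℝ : ℝ) : ℂ))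

/-- The inverse Fourier transform `ℱ^{-1}f(x) = (2π)^{-d/2} ∫ f(ξ) e^{i⟨x,ξ⟩} dξ`. -/
def FTinv {d : ℕ} (f : Rd d → ℂ) (x : Rd d) : ℂ :=
  (((2 * Real.pi) ^ (-(d : ℝ) / 2) : ℝ) : ℂ) *
    ∫ ξ : Rd d, f ξ * Complex.exp (Complex.I * ((⟪x, ξ⟫_ℝ : ℝ) : ℂ))

/-- The phase `φ_t(ξ) = Σ_j v_j⁻¹ (q_j(ξ_j − t v_j) − q_j(ξ_j))`. -/
def phase {d : ℕ} (Q : Fin d → Polynomial ℝ) (v : Rd d) (t : ℝ) (ξ : Rd d) : ℝ :=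
  ∑ j : Fin d, (v j)⁻¹ * ((Q j).eval (ξ j - t * v j) - (Q j).eval (ξ j))

/-- The gradient of the principal part `P_m(ξ) = Σ_j c_{j,m} ξ_j^m`,
where `c_{j,m} = coeff m (p_j)` (which vanishes unless `deg p_j = m`). -/
def gradPm {d : ℕ} (p : Fin d → Polynomial ℝ) (m : ℕ) (ξ : Rd d) : Rd d :=
  (EuclideanSpace.equiv (Fin d) ℝ).symm
    (fun j => (m : ℝ) * ((p j).coeff m) * ξ j ^ (m - 1))

/-- The anisotropic Gabor wave front set `WF_g^σ(u)` of a tempered distribution `u`,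
with respect to a window `g`; `Cj` is complex conjugation on Schwartz functions and
`MT x ξ` is the modulation-translation operator `M_ξ T_x`.  A nonzero point `z` is
*not* in the wave front set iff there is an open set `U ∋ z` on which
`sup λ^N |V_g u(λx, λ^σ ξ)| < ∞` for every `N ≥ 0`. -/
def WFset {d : ℕ} (σ : ℝ) (g : SchwartzMap (Rd d) ℂ)
    (Cj : SchwartzMap (Rd d) ℂ → SchwartzMap (Rd d) ℂ)
    (MT : Rd d → Rd d → SchwartzMap (Rd d) ℂ → SchwartzMap (Rd d) ℂ)
    (u : TD d) : Set (Rd d × Rd d) :=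
  {z | z ≠ 0 ∧ ¬ ∃ U : Set (Rd d × Rd d), IsOpen U ∧ z ∈ U ∧
    ∀ N : ℝ, 0 ≤ N → ∃ B : ℝ, ∀ w ∈ U, ∀ l : ℝ, 0 < l →
      l ^ N * ((2 * Real.pi) ^ (-(d : ℝ) / 2) *
        ‖u (Cj (MT (l • w.1) (l ^ σ • w.2) g))‖) ≤ B}


namespace St9

open Complex FourierTransform

lemma coord_le_norm {d : ℕ} (x : Rd d) (j : Fin d) : |x j| ≤ ‖x‖ := by
  rw [EuclideanSpace.norm_eq]
  have h1 : |x j| = Real.sqrt (‖x j‖ ^ 2) := by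
    rw [Real.sqrt_sq_eq_abs]; simp [Real.norm_eq_abs]
  rw [h1]
  apply Real.sqrt_le_sqrt
  exact Finset.single_le_sum (f := fun i => ‖x i‖ ^ 2) (fun i _ => by positivity)
    (Finset.mem_univ j)

lemma norm_cexp_re_zero {z : ℂ} (hz : z.re = 0) : ‖Complex.exp z‖ = 1 := by
  rw [Complex.norm_exp, hz, Real.exp_zero]

lemma norm_cexp_I_mul (r : ℝ) : ‖Complex.exp (Complex.I * (r : ℂ))‖ = 1 :=
  norm_cexp_re_zero (by simp)

lemma norm_cexp_neg_I_mul (r : ℝ) : ‖Complex.exp (-Complex.I * (r : ℂ))‖ = 1 :=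
  norm_cexp_re_zero (by simp)

lemma norm_cexp_I_mul' (t r : ℝ) : ‖Complex.exp (Complex.I * (t : ℂ) * (r : ℂ))‖ = 1 :=
  norm_cexp_re_zero (by simp [Complex.mul_re])

lemma norm_cexp_neg_I_mul' (t r : ℝ) : ‖Complex.exp (-Complex.I * (t : ℂ) * (r : ℂ))‖ = 1 :=
  norm_cexp_re_zero (by simp [Complex.mul_re])

lemma FT_eq {d : ℕ} (f : Rd d → ℂ) (ξ : Rd d) :
    FT f ξ = (((2 * Real.pi) ^ (-(d : ℝ) / 2) : ℝ) : ℂ) * 𝓕 f ((2 * Real.pi)⁻¹ • ξ) := by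
  rw [FT, Real.fourier_eq']
  congr 1
  congr 1
  funext x
  rw [real_inner_smul_right, smul_eq_mul]
  have hπ : (2 * Real.pi) ≠ 0 := by positivity
  have : -2 * π * ((2 * π)⁻¹ * ⟪x, ξ⟫_ℝ) = -⟪x, ξ⟫_ℝ := by field_simp
  rw [this]
  push_cast
  ring

lemma FTinv_eq {d : ℕ} (f : Rd d → ℂ) (x : Rd d) :
    FTinv f x = (((2 * Real.pi) ^ (-(d : ℝ) / 2) : ℝ) : ℂ) * 𝓕⁻ f ((2 * Real.pi)⁻¹ • x) := by
  rw [FTinv, Real.fourierInv_eq']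
  congr 1
  congr 1
  funext ξ
  rw [real_inner_smul_right, smul_eq_mul]
  have hπ : (2 * Real.pi) ≠ 0 := by positivity
  have : 2 * π * ((2 * π)⁻¹ * ⟪ξ, x⟫_ℝ) = ⟪ξ, x⟫_ℝ := by field_simp
  rw [this, real_inner_comm ξ x]
  ring

lemma const_sq {d : ℕ} :
    (((2 * Real.pi) ^ (-(d : ℝ) / 2) : ℝ)) * ((2 * Real.pi) ^ (-(d : ℝ) / 2) : ℝ)
      * ((2 * Real.pi) ^ (d : ℕ) : ℝ) = 1 := by
  have h2 : (0:ℝ) < 2 * Real.pi := by positivity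
  rw [← Real.rpow_natCast (2 * Real.pi) d, ← Real.rpow_add h2, ← Real.rpow_add h2]
  rw [show -(d : ℝ) / 2 + -(d : ℝ) / 2 + (d : ℝ) = 0 by ring, Real.rpow_zero]

/-- Fourier inversion for the custom normalization. -/
lemma FTinv_FT {d : ℕ} (f : Rd d → ℂ) (hc : Continuous f) (hi : Integrable f)
    (hi' : Integrable (𝓕 f)) (x : Rd d) : FTinv (FT f) x = f x := by
  have hπ : (2 * Real.pi) ≠ 0 := by positivity
  set C : ℝ := ((2 * Real.pi) ^ (-(d : ℝ) / 2) : ℝ) with hC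
  set G : Rd d → ℂ := fun η => 𝓕 f η * Complex.exp (Complex.I * ((2 * Real.pi * ⟪x, η⟫_ℝ : ℝ) : ℂ))
    with hG
  have key : (fun ξ : Rd d => FT f ξ * Complex.exp (Complex.I * ((⟪x, ξ⟫_ℝ : ℝ) : ℂ)))
      = fun ξ => (C : ℂ) * G ((2 * Real.pi)⁻¹ • ξ) := by
    funext ξ
    rw [FT_eq, hG]
    simp only []
    rw [real_inner_smul_right]
    have : 2 * Real.pi * ((2 * π)⁻¹ * ⟪x, ξ⟫_ℝ) = ⟪x, ξ⟫_ℝ := by field_simp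
    rw [this]
    ring
  rw [FTinv, key, integral_const_mul]
  have hcv : ∫ ξ : Rd d, G ((2 * Real.pi)⁻¹ • ξ)
      = |(((2 * Real.pi)⁻¹ : ℝ) ^ (d : ℕ))⁻¹| • ∫ η, G η := by
    have := MeasureTheory.Measure.integral_comp_smul (μ := volume) G ((2 * Real.pi)⁻¹)
    rwa [finrank_euclideanSpace_fin] at this
  rw [hcv]
  have hGint : ∫ η, G η = f x := by
    have h2 : ∫ η, G η = 𝓕⁻ (𝓕 f) x := by
      rw [Real.fourierInv_eq']
      congr 1
      funext η
      show 𝓕 f η * Complex.exp (Complex.I * ((2 * Real.pi * ⟪x, η⟫_ℝ : ℝ) : ℂ)) = _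
      rw [real_inner_comm η x, smul_eq_mul]
      push_cast
      ring
    rw [h2, hc.fourierInv_fourier_eq hi hi']
  rw [hGint]
  have habs : |(((2 * Real.pi)⁻¹ : ℝ) ^ (d : ℕ))⁻¹| = ((2 * Real.pi) ^ (d : ℕ) : ℝ) := by
    rw [← inv_pow, inv_inv, abs_of_pos (by positivity)]
  rw [habs]
  have hsm : ((2 * Real.pi) ^ (d : ℕ) : ℝ) • f x = (((2 * Real.pi) ^ (d : ℕ) : ℝ) : ℂ) * f x := by
    rw [Complex.real_smul]
  rw [hsm]
  have : (C : ℂ) * ((C : ℂ) * ((((2 * Real.pi) ^ (d : ℕ) : ℝ) : ℂ) * f x))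
      = ((C * C * ((2 * Real.pi) ^ (d : ℕ) : ℝ) : ℝ) : ℂ) * f x := by push_cast; ring
  rw [this, hC, const_sq]
  simp

/-- Other-direction Fourier inversion for the custom normalization. -/
lemma FT_FTinv {d : ℕ} (f : Rd d → ℂ) (hc : Continuous f) (hi : Integrable f)
    (hi' : Integrable (FTinv f)) (ξ : Rd d) : FT (FTinv f) ξ = f ξ := by
  have hπ : ((2 * Real.pi)⁻¹ : ℝ) ≠ 0 := by positivity
  have hπ' : (2 * Real.pi : ℝ) ≠ 0 := by positivity
  set C : ℝ := ((2 * Real.pi) ^ (-(d : ℝ) / 2) : ℝ) with hCdef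
  have hCne : (C : ℂ) ≠ 0 := by
    simp only [ne_eq, Complex.ofReal_eq_zero, hCdef]
    positivity
  have hFinv_eq : (𝓕⁻ f) = fun η => (C : ℂ)⁻¹ * FTinv f ((2 * Real.pi) • η) := by
    funext η
    rw [FTinv_eq, smul_smul, inv_mul_cancel₀ hπ', one_smul]
    field_simp
    simp only [hCdef, neg_div]
  have hi2 : Integrable (𝓕⁻ f) := by
    rw [hFinv_eq]
    exact (hi'.comp_smul hπ').const_mul _
  have hi3 : Integrable (𝓕 f) := by
    have heq : (𝓕 f) = fun w => (𝓕⁻ f) ((-1 : ℝ) • w) := by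
      funext w
      rw [Real.fourierInv_eq_fourier_neg]
      simp
    rw [heq]
    exact hi2.comp_smul (by norm_num)
  set G : Rd d → ℂ := fun η => 𝓕⁻ f η *
    Complex.exp (-Complex.I * ((2 * Real.pi * ⟪η, ξ⟫_ℝ : ℝ) : ℂ)) with hG
  have key : (fun x : Rd d => FTinv f x * Complex.exp (-Complex.I * ((⟪x, ξ⟫_ℝ : ℝ) : ℂ)))
      = fun x => (C : ℂ) * G ((2 * Real.pi)⁻¹ • x) := by
    funext x
    rw [FTinv_eq, hG]
    show _ = (C:ℂ) * (𝓕⁻ f ((2 * Real.pi)⁻¹ • x) *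
      Complex.exp (-Complex.I * ((2 * Real.pi * ⟪(2 * Real.pi)⁻¹ • x, ξ⟫_ℝ : ℝ) : ℂ)))
    rw [real_inner_smul_left]
    have h9 : 2 * Real.pi * ((2 * π)⁻¹ * ⟪x, ξ⟫_ℝ) = ⟪x, ξ⟫_ℝ := by field_simp
    rw [h9]
    ring
  rw [FT, key, integral_const_mul]
  have hcv : ∫ x : Rd d, G ((2 * Real.pi)⁻¹ • x)
      = |(((2 * Real.pi)⁻¹ : ℝ) ^ (d : ℕ))⁻¹| • ∫ η, G η := by
    have := MeasureTheory.Measure.integral_comp_smul (μ := volume) G ((2 * Real.pi)⁻¹)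
    rwa [finrank_euclideanSpace_fin] at this
  rw [hcv]
  have hGint : ∫ η, G η = f ξ := by
    have h2 : ∫ η, G η = 𝓕 (𝓕⁻ f) ξ := by
      rw [Real.fourier_eq']
      congr 1
      funext η
      show 𝓕⁻ f η * Complex.exp (-Complex.I * ((2 * Real.pi * ⟪η, ξ⟫_ℝ : ℝ) : ℂ)) = _
      rw [smul_eq_mul]
      push_cast
      ring
    rw [h2, hc.fourier_fourierInv_eq hi hi3]
  rw [hGint]
  have habs : |(((2 * Real.pi)⁻¹ : ℝ) ^ (d : ℕ))⁻¹| = ((2 * Real.pi) ^ (d : ℕ) : ℝ) := by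
    rw [← inv_pow, inv_inv, abs_of_pos (by positivity)]
  rw [habs]
  have hsm : ((2 * Real.pi) ^ (d : ℕ) : ℝ) • f ξ = (((2 * Real.pi) ^ (d : ℕ) : ℝ) : ℂ) * f ξ := by
    rw [Complex.real_smul]
  rw [hsm]
  have : (C : ℂ) * ((C : ℂ) * ((((2 * Real.pi) ^ (d : ℕ) : ℝ) : ℂ) * f ξ))
      = ((C * C * ((2 * Real.pi) ^ (d : ℕ) : ℝ) : ℝ) : ℂ) * f ξ := by push_cast; ring
  rw [this, hCdef, const_sq]
  simp

lemma FT_schwartz_eq {d : ℕ} (f : SchwartzMap (Rd d) ℂ) :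
    FT ⇑f = fun ξ => (((2 * Real.pi) ^ (-(d : ℝ) / 2) : ℝ) : ℂ) *
      (SchwartzMap.fourierTransformCLM ℂ f) ((2 * Real.pi)⁻¹ • ξ) := by
  funext ξ
  rw [FT_eq, SchwartzMap.fourierTransformCLM_apply, SchwartzMap.fourier_coe]

lemma FT_continuous {d : ℕ} (f : SchwartzMap (Rd d) ℂ) : Continuous (FT ⇑f) := by
  rw [FT_schwartz_eq]
  exact continuous_const.mul
    ((SchwartzMap.fourierTransformCLM ℂ f).continuous.comp (continuous_const_smul _))

lemma FT_integrable {d : ℕ} (f : SchwartzMap (Rd d) ℂ) : Integrable (FT ⇑f) := by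
  have hπ' : (2 * Real.pi : ℝ)⁻¹ ≠ 0 := by positivity
  rw [FT_schwartz_eq]
  exact (((SchwartzMap.fourierTransformCLM ℂ f).integrable (μ := volume)).comp_smul
    hπ').const_mul _

lemma FT_pow_integrable {d : ℕ} (f : SchwartzMap (Rd d) ℂ) (k : ℕ) :
    Integrable (fun ξ : Rd d => ‖ξ‖ ^ k * ‖FT ⇑f ξ‖) := by
  have hπ' : (2 * Real.pi : ℝ)⁻¹ ≠ 0 := by positivity
  set W := SchwartzMap.fourierTransformCLM ℂ f with hW
  have base : Integrable (fun ξ : Rd d =>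
      ‖(2 * Real.pi)⁻¹ • ξ‖ ^ k * ‖W ((2 * Real.pi)⁻¹ • ξ)‖) :=
    (W.integrable_pow_mul volume k).comp_smul hπ'
  apply (base.const_mul ((2 * Real.pi) ^ k * |((2 * Real.pi) ^ (-(d : ℝ) / 2) : ℝ)|)).congr
  apply Filter.Eventually.of_forall
  intro ξ
  rw [FT_schwartz_eq]
  show (2 * Real.pi) ^ k * |((2 * Real.pi) ^ (-(d : ℝ) / 2) : ℝ)| *
      (‖(2 * Real.pi)⁻¹ • ξ‖ ^ k * ‖W ((2 * Real.pi)⁻¹ • ξ)‖)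
    = ‖ξ‖ ^ k * ‖(((2 * Real.pi) ^ (-(d : ℝ) / 2) : ℝ) : ℂ) * W ((2 * Real.pi)⁻¹ • ξ)‖
  rw [norm_mul, Complex.norm_real, norm_smul, Real.norm_eq_abs,
    abs_of_pos (show (0:ℝ) < (2 * Real.pi)⁻¹ by positivity), mul_pow, Real.norm_eq_abs]
  have h0 : (2 * Real.pi) ^ k * ((2 * Real.pi)⁻¹) ^ k = 1 := by
    rw [← mul_pow, mul_inv_cancel₀ (by positivity), one_pow]
  linear_combination (|((2 * Real.pi) ^ (-(d : ℝ) / 2) : ℝ)| * ‖ξ‖ ^ k * ‖W ((2 * Real.pi)⁻¹ • ξ)‖) * h0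

lemma one_add_pow_integrable {d : ℕ} (f : SchwartzMap (Rd d) ℂ) (m : ℕ) :
    Integrable (fun ξ : Rd d => (1 + ‖ξ‖) ^ m * ‖FT ⇑f ξ‖) := by
  have heq : (fun ξ : Rd d => (1 + ‖ξ‖) ^ m * ‖FT ⇑f ξ‖)
      = fun ξ => ∑ k ∈ Finset.range (m+1), (m.choose k : ℝ) * (‖ξ‖ ^ k * ‖FT ⇑f ξ‖) := by
    funext ξ
    rw [add_comm (1:ℝ), add_pow, Finset.sum_mul]
    apply Finset.sum_congr rfl
    intro k _
    push_cast
    ring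
  rw [heq]
  exact integrable_finset_sum _ (fun k _ => (FT_pow_integrable f k).const_mul _)

lemma phase_hasDerivAt {d : ℕ} (Q p : Fin d → Polynomial ℝ)
    (hQ : ∀ j, Polynomial.derivative (Q j) = p j) (v : Rd d) (hv : ∀ j, v j ≠ 0)
    (ξ : Rd d) (s : ℝ) :
    HasDerivAt (fun s : ℝ => phase Q v s ξ)
      (-(∑ j, (p j).eval (ξ j - s * v j))) s := by
  have hterm : ∀ j : Fin d, HasDerivAt
      (fun s : ℝ => (v j)⁻¹ * ((Q j).eval (ξ j - s * v j) - (Q j).eval (ξ j)))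
      (-((p j).eval (ξ j - s * v j))) s := by
    intro j
    have hin : HasDerivAt (fun s : ℝ => ξ j - s * v j) (-(v j)) s :=
      (hasDerivAt_mul_const (v j)).const_sub (ξ j)
    have hpoly := (Polynomial.hasDerivAt (Q j) (ξ j - s * v j)).comp s hin
    have h2 := (hpoly.sub_const ((Q j).eval (ξ j))).const_mul ((v j)⁻¹)
    refine h2.congr_deriv ?_
    rw [hQ j]
    field_simp [hv j]
  have hsum := HasDerivAt.fun_sum (u := Finset.univ) (fun j _ => hterm j)
  refine hsum.congr_deriv ?_
  rw [Finset.sum_neg_distrib]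

lemma eval_abs_le {P : Polynomial ℝ} {n : ℕ} (hn : P.natDegree ≤ n) {y R : ℝ} (hy : |y| ≤ R) :
    |P.eval y| ≤ ∑ k ∈ Finset.range (n+1), |P.coeff k| * R ^ k := by
  rw [Polynomial.eval_eq_sum_range' (lt_of_le_of_lt hn (Nat.lt_succ_self n))]
  refine (Finset.abs_sum_le_sum_abs _ _).trans ?_
  apply Finset.sum_le_sum
  intro k _
  rw [abs_mul, _root_.abs_pow]
  exact mul_le_mul_of_nonneg_left (pow_le_pow_left₀ (abs_nonneg y) hy k) (abs_nonneg _)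

lemma phase_continuous {d : ℕ} (Q : Fin d → Polynomial ℝ) (v : Rd d) (t : ℝ) :
    Continuous (fun ξ : Rd d => phase Q v t ξ) := by
  unfold phase
  apply continuous_finset_sum
  intro j _
  apply continuous_const.mul
  apply Continuous.sub
  · exact (Q j).continuous_aeval.comp
      (((EuclideanSpace.proj j : Rd d →L[ℝ] ℝ).continuous).sub continuous_const)
  · exact (Q j).continuous_aeval.comp (EuclideanSpace.proj j : Rd d →L[ℝ] ℝ).continuous

lemma sum_eval_continuous {d : ℕ} (p : Fin d → Polynomial ℝ) (c : Fin d → ℝ) :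
    Continuous (fun ξ : Rd d => ∑ j, (p j).eval (ξ j - c j)) := by
  apply continuous_finset_sum
  intro j _
  exact (p j).continuous_aeval.comp
    (((EuclideanSpace.proj j : Rd d →L[ℝ] ℝ).continuous).sub continuous_const)

/-! ### The integrand and its derivative -/

def hf {d : ℕ} (Q : Fin d → Polynomial ℝ) (v : Rd d) (u₀ : SchwartzMap (Rd d) ℂ)
    (t : ℝ) (ξ : Rd d) : ℂ :=
  Complex.exp (Complex.I * ((phase Q v t ξ : ℝ) : ℂ)) * FT (⇑u₀) ξ

def Ff {d : ℕ} (Q : Fin d → Polynomial ℝ) (v : Rd d) (u₀ : SchwartzMap (Rd d) ℂ)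
    (x : Rd d) (s : ℝ) (ξ : Rd d) : ℂ :=
  Complex.exp (Complex.I * ((phase Q v s ξ : ℝ) : ℂ)) *
    (FT (⇑u₀) ξ * Complex.exp (Complex.I * ((⟪x, ξ⟫_ℝ : ℝ) : ℂ)))

def Pf {d : ℕ} (p : Fin d → Polynomial ℝ) (v : Rd d) (s : ℝ) (ξ : Rd d) : ℝ :=
  ∑ j, (p j).eval (ξ j - s * v j)

def F'f {d : ℕ} (p Q : Fin d → Polynomial ℝ) (v : Rd d) (u₀ : SchwartzMap (Rd d) ℂ)
    (x : Rd d) (s : ℝ) (ξ : Rd d) : ℂ :=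
  (-Complex.I * ((Pf p v s ξ : ℝ) : ℂ)) * Ff Q v u₀ x s ξ

lemma hf_cont {d : ℕ} (Q : Fin d → Polynomial ℝ) (v : Rd d) (u₀ : SchwartzMap (Rd d) ℂ)
    (t : ℝ) : Continuous (hf Q v u₀ t) :=
  (Complex.continuous_exp.comp (continuous_const.mul
    (Complex.continuous_ofReal.comp (phase_continuous Q v t)))).mul (FT_continuous u₀)

lemma hf_norm {d : ℕ} (Q : Fin d → Polynomial ℝ) (v : Rd d) (u₀ : SchwartzMap (Rd d) ℂ)
    (t : ℝ) (ξ : Rd d) : ‖hf Q v u₀ t ξ‖ = ‖FT (⇑u₀) ξ‖ := by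
  rw [hf, norm_mul, norm_cexp_I_mul, one_mul]

lemma hf_integrable {d : ℕ} (Q : Fin d → Polynomial ℝ) (v : Rd d) (u₀ : SchwartzMap (Rd d) ℂ)
    (t : ℝ) : Integrable (hf Q v u₀ t) :=
  (FT_integrable u₀).norm.mono' (hf_cont Q v u₀ t).aestronglyMeasurable
    (Filter.Eventually.of_forall fun ξ => (hf_norm Q v u₀ t ξ).le)

lemma inner_cont {d : ℕ} (x : Rd d) : Continuous (fun ξ : Rd d => ⟪x, ξ⟫_ℝ) :=
  continuous_const.inner continuous_id

lemma inner_cont' {d : ℕ} (v : Rd d) : Continuous (fun x' : Rd d => ⟪x', v⟫_ℝ) :=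
  continuous_id.inner continuous_const

lemma Ff_cont {d : ℕ} (Q : Fin d → Polynomial ℝ) (v : Rd d) (u₀ : SchwartzMap (Rd d) ℂ)
    (x : Rd d) (s : ℝ) : Continuous (Ff Q v u₀ x s) :=
  (Complex.continuous_exp.comp (continuous_const.mul
    (Complex.continuous_ofReal.comp (phase_continuous Q v s)))).mul
    ((FT_continuous u₀).mul (Complex.continuous_exp.comp (continuous_const.mul
      (Complex.continuous_ofReal.comp (inner_cont x)))))

lemma Ff_norm {d : ℕ} (Q : Fin d → Polynomial ℝ) (v : Rd d) (u₀ : SchwartzMap (Rd d) ℂ)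
    (x : Rd d) (s : ℝ) (ξ : Rd d) : ‖Ff Q v u₀ x s ξ‖ = ‖FT (⇑u₀) ξ‖ := by
  rw [Ff, norm_mul, norm_mul, norm_cexp_I_mul, norm_cexp_I_mul, one_mul, mul_one]

lemma Ff_integrable {d : ℕ} (Q : Fin d → Polynomial ℝ) (v : Rd d) (u₀ : SchwartzMap (Rd d) ℂ)
    (x : Rd d) (s : ℝ) : Integrable (Ff Q v u₀ x s) :=
  (FT_integrable u₀).norm.mono' (Ff_cont Q v u₀ x s).aestronglyMeasurable
    (Filter.Eventually.of_forall fun ξ => (Ff_norm Q v u₀ x s ξ).le)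

lemma Pf_cont {d : ℕ} (p : Fin d → Polynomial ℝ) (v : Rd d) (s : ℝ) :
    Continuous (Pf p v s) := by
  have := sum_eval_continuous p (fun j => s * v j)
  exact this

lemma F'f_cont {d : ℕ} (p Q : Fin d → Polynomial ℝ) (v : Rd d) (u₀ : SchwartzMap (Rd d) ℂ)
    (x : Rd d) (s : ℝ) : Continuous (F'f p Q v u₀ x s) :=
  (continuous_const.mul (Complex.continuous_ofReal.comp (Pf_cont p v s))).mul
    (Ff_cont Q v u₀ x s)

lemma Ff_hasDerivAt {d : ℕ} (p Q : Fin d → Polynomial ℝ)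
    (hQ : ∀ j, Polynomial.derivative (Q j) = p j) (v : Rd d) (hv : ∀ j, v j ≠ 0)
    (u₀ : SchwartzMap (Rd d) ℂ) (x : Rd d) (ξ : Rd d) (s : ℝ) :
    HasDerivAt (fun s' : ℝ => Ff Q v u₀ x s' ξ) (F'f p Q v u₀ x s ξ) s := by
  have h1 := phase_hasDerivAt Q p hQ v hv ξ s
  have h2 := h1.ofReal_comp
  have h3 := h2.const_mul Complex.I
  have h4 := h3.cexp
  have h5 := h4.mul_const (FT (⇑u₀) ξ * Complex.exp (Complex.I * ((⟪x, ξ⟫_ℝ : ℝ) : ℂ)))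
  refine h5.congr_deriv ?_
  simp only [F'f, Ff, Pf]
  push_cast
  ring

lemma F'f_bound {d : ℕ} (p Q : Fin d → Polynomial ℝ) (v : Rd d)
    (m : ℕ) (hdeg : ∀ j, (p j).natDegree ≤ m)
    (u₀ : SchwartzMap (Rd d) ℂ) (x : Rd d) (t : ℝ) :
    ∀ ξ : Rd d, ∀ s ∈ Metric.ball t 1, ‖F'f p Q v u₀ x s ξ‖ ≤
      (∑ j, ∑ k ∈ Finset.range (m+1), |(p j).coeff k| * (1 + (|t| + 1) * ‖v‖) ^ k) *
        ((1 + ‖ξ‖) ^ m * ‖FT (⇑u₀) ξ‖) := by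
  intro ξ s hs
  set c0 : ℝ := (|t| + 1) * ‖v‖ with hc0
  have hc0nn : 0 ≤ c0 := by positivity
  have hFn : ‖F'f p Q v u₀ x s ξ‖ = |Pf p v s ξ| * ‖FT (⇑u₀) ξ‖ := by
    rw [F'f, norm_mul, norm_mul, norm_neg, Complex.norm_I, one_mul, Complex.norm_real,
      Real.norm_eq_abs, Ff_norm]
  have hs' : |s| ≤ |t| + 1 := by
    have h1 : dist s t < 1 := Metric.mem_ball.mp hs
    rw [Real.dist_eq] at h1
    have h2 : |s| = |t + (s - t)| := by congr 1; ring
    rw [h2]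
    calc |t + (s - t)| ≤ |t| + |s - t| := abs_add_le _ _
      _ ≤ |t| + 1 := by linarith
  have hcoord : ∀ j, |ξ j - s * v j| ≤ (1 + c0) * (1 + ‖ξ‖) := by
    intro j
    have h1 : |ξ j - s * v j| ≤ |ξ j| + |s| * |v j| := by
      rw [sub_eq_add_neg]
      refine (abs_add_le _ _).trans ?_
      rw [abs_neg, abs_mul]
    have h2 : |s| * |v j| ≤ (|t| + 1) * ‖v‖ :=
      mul_le_mul hs' (coord_le_norm v j) (abs_nonneg _) (by positivity)
    have h3 : |ξ j| ≤ ‖ξ‖ := coord_le_norm ξ j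
    nlinarith [norm_nonneg ξ]
  have hsum : |Pf p v s ξ| ≤
      (∑ j, ∑ k ∈ Finset.range (m+1), |(p j).coeff k| * (1 + c0) ^ k) * (1 + ‖ξ‖) ^ m := by
    rw [Pf]
    refine (Finset.abs_sum_le_sum_abs _ _).trans ?_
    rw [Finset.sum_mul]
    apply Finset.sum_le_sum
    intro j _
    refine (eval_abs_le (hdeg j) (hcoord j)).trans ?_
    rw [Finset.sum_mul]
    apply Finset.sum_le_sum
    intro k hk
    have hk' : k ≤ m := Nat.lt_succ_iff.mp (Finset.mem_range.mp hk)
    have h4 : (1 + ‖ξ‖) ^ k ≤ (1 + ‖ξ‖) ^ m :=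
      pow_le_pow_right₀ (by linarith [norm_nonneg ξ]) hk'
    calc |(p j).coeff k| * ((1 + c0) * (1 + ‖ξ‖)) ^ k
        = |(p j).coeff k| * (1 + c0) ^ k * (1 + ‖ξ‖) ^ k := by rw [mul_pow]; ring
      _ ≤ |(p j).coeff k| * (1 + c0) ^ k * (1 + ‖ξ‖) ^ m := by
          apply mul_le_mul_of_nonneg_left h4 (by positivity)
  calc ‖F'f p Q v u₀ x s ξ‖ = |Pf p v s ξ| * ‖FT (⇑u₀) ξ‖ := hFn
    _ ≤ ((∑ j, ∑ k ∈ Finset.range (m+1), |(p j).coeff k| * (1 + c0) ^ k) * (1 + ‖ξ‖) ^ m)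
        * ‖FT (⇑u₀) ξ‖ := mul_le_mul_of_nonneg_right hsum (norm_nonneg _)
    _ = (∑ j, ∑ k ∈ Finset.range (m+1), |(p j).coeff k| * (1 + c0) ^ k) *
        ((1 + ‖ξ‖) ^ m * ‖FT (⇑u₀) ξ‖) := by ring

lemma keyDeriv {d : ℕ} (p Q : Fin d → Polynomial ℝ)
    (hQ : ∀ j, Polynomial.derivative (Q j) = p j) (v : Rd d) (hv : ∀ j, v j ≠ 0)
    (m : ℕ) (hdeg : ∀ j, (p j).natDegree ≤ m)
    (u₀ : SchwartzMap (Rd d) ℂ) (x : Rd d) (t : ℝ) :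
    HasDerivAt (fun s : ℝ => ∫ ξ : Rd d, Ff Q v u₀ x s ξ)
      (∫ ξ : Rd d, F'f p Q v u₀ x t ξ) t := by
  have main := hasDerivAt_integral_of_dominated_loc_of_deriv_le (μ := volume)
    (F := fun s ξ => Ff Q v u₀ x s ξ) (F' := fun s ξ => F'f p Q v u₀ x s ξ)
    (x₀ := t)
    (bound := fun ξ => (∑ j, ∑ k ∈ Finset.range (m+1),
      |(p j).coeff k| * (1 + (|t| + 1) * ‖v‖) ^ k) * ((1 + ‖ξ‖) ^ m * ‖FT (⇑u₀) ξ‖))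
    (Metric.ball_mem_nhds t one_pos)
    (Filter.Eventually.of_forall fun s => (Ff_cont Q v u₀ x s).aestronglyMeasurable)
    (Ff_integrable Q v u₀ x t)
    (F'f_cont p Q v u₀ x t).aestronglyMeasurable
    (Filter.Eventually.of_forall (F'f_bound p Q v m hdeg u₀ x t))
    ((one_add_pow_integrable u₀ m).const_mul _)
    (Filter.Eventually.of_forall fun ξ s _ => Ff_hasDerivAt p Q hQ v hv u₀ x ξ s)
  exact main.2

end St9

/-- For `u₀ ∈ 𝒮(ℝ^d)`, `u(t,·) = 𝒦_t u₀` is Schwartz for every `t`, `t ↦ u(t,x)` is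
differentiable, `u(0,·) = u₀`, and `∂_t u(t,x) + i (p(D)u(t,·)(x) + ⟨v,x⟩u(t,x)) = 0`,
where `p(D)f = ℱ^{-1}(p·ℱf)`. -/
theorem statement9 {d : ℕ} (v : Rd d) (hv : ∀ j, v j ≠ 0)
    (p : Fin d → Polynomial ℝ) (m : ℕ) (hm : 2 ≤ m)
    (hdeg : ∀ j, (p j).natDegree ≤ m) (hdeg' : ∃ j, (p j).natDegree = m)
    (Q : Fin d → Polynomial ℝ) (hQ : ∀ j, Polynomial.derivative (Q j) = p j)
    -- the propagator on Schwartz functions (in particular `u(t,·) ∈ 𝒮(ℝ^d)`)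
    (K : ℝ → SchwartzMap (Rd d) ℂ → SchwartzMap (Rd d) ℂ)
    (hK : ∀ (t : ℝ) (f : SchwartzMap (Rd d) ℂ) (x : Rd d),
      K t f x = Complex.exp (-Complex.I * (t : ℂ) * ((⟪x, v⟫_ℝ : ℝ) : ℂ)) *
        FTinv (fun ξ => Complex.exp (Complex.I * ((phase Q v t ξ : ℝ) : ℂ)) * FT (⇑f) ξ) x) :
    ∀ u₀ : SchwartzMap (Rd d) ℂ,
      K 0 u₀ = u₀ ∧
      ∀ (t : ℝ) (x : Rd d),
        HasDerivAt (fun s : ℝ => K s u₀ x)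
          (-Complex.I *
            (FTinv (fun ξ => (((∑ j, (p j).eval (ξ j) : ℝ)) : ℂ) * FT (⇑(K t u₀)) ξ) x
              + ((⟪x, v⟫_ℝ : ℝ) : ℂ) * K t u₀ x)) t := by
  intro u₀
  have hFu : Integrable (FourierTransform.fourier ⇑u₀) := by
    have := (SchwartzMap.fourierTransformCLM ℂ u₀).integrable (μ := volume)
    rwa [SchwartzMap.fourierTransformCLM_apply, SchwartzMap.fourier_coe] at this
  constructor
  · ext x
    rw [hK]
    have h0 : (fun ξ => Complex.exp (Complex.I * ((phase Q v 0 ξ : ℝ) : ℂ)) * FT (⇑u₀) ξ)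
        = FT ⇑u₀ := by
      funext ξ
      have hp0 : phase Q v 0 ξ = 0 := by simp [phase]
      rw [hp0]
      simp
    rw [h0, St9.FTinv_FT ⇑u₀ u₀.continuous (u₀.integrable) hFu x]
    simp
  · intro t x
    -- identify `fun s => K s u₀ x` with the explicit integral
    have hKs : (fun s : ℝ => K s u₀ x)
        = fun s : ℝ => Complex.exp (-Complex.I * (s : ℂ) * ((⟪x, v⟫_ℝ : ℝ) : ℂ)) *
            ((((2 * Real.pi) ^ (-(d : ℝ) / 2) : ℝ) : ℂ) * ∫ ξ : Rd d, St9.Ff Q v u₀ x s ξ) := by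
      funext s
      rw [hK, FTinv]
      congr 2
      congr 1
      funext ξ
      simp only [St9.Ff]
      ring
    -- the modulation factor derivative
    have hE : HasDerivAt (fun s : ℝ => Complex.exp (-Complex.I * (s : ℂ) * ((⟪x, v⟫_ℝ : ℝ) : ℂ)))
        ((-Complex.I * ((⟪x, v⟫_ℝ : ℝ) : ℂ)) *
          Complex.exp (-Complex.I * (t : ℂ) * ((⟪x, v⟫_ℝ : ℝ) : ℂ))) t := by
      have h1 : HasDerivAt (fun s : ℝ => ((s : ℝ) : ℂ)) 1 t := (hasDerivAt_id t).ofReal_comp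
      have h2 := (h1.const_mul (-Complex.I)).mul_const (((⟪x, v⟫_ℝ : ℝ) : ℂ))
      have h3 := h2.cexp
      convert h3 using 1
      ring
    have hd := (St9.keyDeriv p Q hQ v hv m hdeg u₀ x t).const_mul
      ((((2 * Real.pi) ^ (-(d : ℝ) / 2) : ℝ) : ℂ))
    have hmul := hE.mul hd
    rw [hKs]
    refine hmul.congr_deriv ?_
    -- now identify the derivative values
    have hFT_K : ∀ ξ : Rd d, FT (⇑(K t u₀)) ξ = St9.hf Q v u₀ t (ξ + t • v) := by
      intro ξ
      have hlam : (fun ξ0 => Complex.exp (Complex.I * ((phase Q v t ξ0 : ℝ) : ℂ)) * FT (⇑u₀) ξ0)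
          = St9.hf Q v u₀ t := rfl
      have hFTinv_hf : FTinv (St9.hf Q v u₀ t)
          = fun x' => Complex.exp (Complex.I * (t : ℂ) * ((⟪x', v⟫_ℝ : ℝ) : ℂ)) * K t u₀ x' := by
        funext x'
        rw [hK t u₀ x', hlam, ← mul_assoc, ← Complex.exp_add]
        rw [show Complex.I * (t : ℂ) * ((⟪x', v⟫_ℝ : ℝ) : ℂ) +
            -Complex.I * (t : ℂ) * ((⟪x', v⟫_ℝ : ℝ) : ℂ) = 0 by ring, Complex.exp_zero, one_mul]
      have hinv_int : Integrable (FTinv (St9.hf Q v u₀ t)) := by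
        rw [hFTinv_hf]
        refine ((K t u₀).integrable (μ := volume)).norm.mono' ?_ ?_
        · exact ((Complex.continuous_exp.comp ((continuous_const.mul
            (Complex.continuous_ofReal.comp (St9.inner_cont' v))))).mul
            (K t u₀).continuous).aestronglyMeasurable
        · refine Filter.Eventually.of_forall fun x' => ?_
          rw [norm_mul, St9.norm_cexp_I_mul', one_mul]
      have hstep : (fun x' : Rd d => (K t u₀) x' *
            Complex.exp (-Complex.I * ((⟪x', ξ⟫_ℝ : ℝ) : ℂ)))
          = fun x' => FTinv (St9.hf Q v u₀ t) x' *
            Complex.exp (-Complex.I * ((⟪x', ξ + t • v⟫_ℝ : ℝ) : ℂ)) := by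
        funext x'
        rw [hK t u₀ x', hlam]
        have hin : ⟪x', ξ + t • v⟫_ℝ = ⟪x', ξ⟫_ℝ + t * ⟪x', v⟫_ℝ := by
          rw [inner_add_right, real_inner_smul_right]
        rw [hin, show (-Complex.I) * (((⟪x', ξ⟫_ℝ + t * ⟪x', v⟫_ℝ : ℝ)) : ℂ) =
          (-Complex.I * (t : ℂ) * ((⟪x', v⟫_ℝ : ℝ) : ℂ)) +
            (-Complex.I * ((⟪x', ξ⟫_ℝ : ℝ) : ℂ)) by push_cast; ring, Complex.exp_add]
        ring
      have : FT (⇑(K t u₀)) ξ = FT (FTinv (St9.hf Q v u₀ t)) (ξ + t • v) := by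
        rw [FT, FT, hstep]
      rw [this]
      exact St9.FT_FTinv _ (St9.hf_cont Q v u₀ t) (St9.hf_integrable Q v u₀ t) hinv_int _
    -- rewrite the target FTinv term via translation invariance
    have hFTinv_PK : FTinv (fun ξ => (((∑ j, (p j).eval (ξ j) : ℝ)) : ℂ) * FT (⇑(K t u₀)) ξ) x
        = Complex.exp (-Complex.I * (t : ℂ) * ((⟪x, v⟫_ℝ : ℝ) : ℂ)) *
          ((((2 * Real.pi) ^ (-(d : ℝ) / 2) : ℝ) : ℂ) *
            ∫ ξ : Rd d, ((St9.Pf p v t ξ : ℝ) : ℂ) * St9.Ff Q v u₀ x t ξ) := by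
      rw [FTinv]
      have hint1 : (fun ξ : Rd d => (((∑ j, (p j).eval (ξ j) : ℝ)) : ℂ) * FT (⇑(K t u₀)) ξ *
            Complex.exp (Complex.I * ((⟪x, ξ⟫_ℝ : ℝ) : ℂ)))
          = fun ξ => (fun η : Rd d => (((∑ j, (p j).eval ((η - t • v) j) : ℝ)) : ℂ) *
              St9.hf Q v u₀ t η *
              Complex.exp (Complex.I * ((⟪x, η - t • v⟫_ℝ : ℝ) : ℂ))) (ξ + t • v) := by
        funext ξ
        simp only [add_sub_cancel_right]
        rw [hFT_K ξ]
      rw [hint1, MeasureTheory.integral_add_right_eq_self (μ := volume)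
        (fun η : Rd d => (((∑ j, (p j).eval ((η - t • v) j) : ℝ)) : ℂ) * St9.hf Q v u₀ t η *
          Complex.exp (Complex.I * ((⟪x, η - t • v⟫_ℝ : ℝ) : ℂ))) (t • v)]
      have hint2 : (fun η : Rd d => (((∑ j, (p j).eval ((η - t • v) j) : ℝ)) : ℂ) *
            St9.hf Q v u₀ t η * Complex.exp (Complex.I * ((⟪x, η - t • v⟫_ℝ : ℝ) : ℂ)))
          = fun η => Complex.exp (-Complex.I * (t : ℂ) * ((⟪x, v⟫_ℝ : ℝ) : ℂ)) *
              (((St9.Pf p v t η : ℝ) : ℂ) * St9.Ff Q v u₀ x t η) := by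
        funext η
        have hc : ∀ j : Fin d, (η - t • v) j = η j - t * v j := by
          intro j
          simp [PiLp.sub_apply, PiLp.smul_apply, smul_eq_mul]
        simp only [hc]
        have hin : ⟪x, η - t • v⟫_ℝ = ⟪x, η⟫_ℝ - t * ⟪x, v⟫_ℝ := by
          rw [inner_sub_right, real_inner_smul_right]
        rw [hin, show Complex.I * (((⟪x, η⟫_ℝ - t * ⟪x, v⟫_ℝ : ℝ)) : ℂ) =
          (Complex.I * ((⟪x, η⟫_ℝ : ℝ) : ℂ)) + (-Complex.I * (t : ℂ) * ((⟪x, v⟫_ℝ : ℝ) : ℂ))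
          by push_cast; ring, Complex.exp_add]
        simp only [St9.Pf, St9.Ff, St9.hf]
        ring
      rw [hint2, MeasureTheory.integral_const_mul]
      ring
    have hPull : ∫ ξ : Rd d, St9.F'f p Q v u₀ x t ξ
        = -Complex.I * ∫ ξ : Rd d, ((St9.Pf p v t ξ : ℝ) : ℂ) * St9.Ff Q v u₀ x t ξ := by
      rw [← MeasureTheory.integral_const_mul]
      congr 1
      funext ξ
      simp only [St9.F'f]
      ring
    have hKtx : K t u₀ x = Complex.exp (-Complex.I * (t : ℂ) * ((⟪x, v⟫_ℝ : ℝ) : ℂ)) *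
        ((((2 * Real.pi) ^ (-(d : ℝ) / 2) : ℝ) : ℂ) * ∫ ξ : Rd d, St9.Ff Q v u₀ x t ξ) :=
      congrFun hKs t
    rw [hFTinv_PK, hKtx, hPull]
    ring
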